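/- Let k be a field of characteristic 2 and u, v ∈ k. Set f₀ = (X₀−vX₂)², f₁ = (X₀−vX₂)X₁, f₂ = X₁², f₃ = vX₁X₂ + (X₀+vX₂)X₃ (the defining forms of the 2-isogeny ψ: Q₁ → Q₂), and set g₀ = (X₀ + vX₂)², g₁ = (X₁ + X₃)X₃, g₂ = X₁², g₃ = (X₀ + v(X₁ + X₃))(X₂ + X₃). Then for every (X₀,X₁,X₂,X₃) ∈ k⁴ satisfying the equations of Q₁: g₀ = f₀, g₂ = f₂, g₁ = f₁ + u·f₂, and g₃ = v·f₁ + (1 + uv)·f₂ + f₃. In particular the g's and the f's span the same space modulo the relations of Q₁, and the transformation between them is invertible (determinant 1). -/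
import Mathlib


/-- In characteristic 2, the forms `g₀ = (X₀+vX₂)²`, `g₁ = (X₁+X₃)X₃`,
`g₂ = X₁²`, `g₃ = (X₀+v(X₁+X₃))(X₂+X₃)` span, modulo the relations of
`Q₁`, the same space as the defining forms `(f₀,f₁,f₂,f₃)` of the
2-isogeny `ψ : Q₁ → Q₂`: explicitly `g₀ = f₀`, `g₂ = f₂`,
`g₁ = f₁ + u·f₂`, `g₃ = v·f₁ + (1+uv)·f₂ + f₃` hold on `Q₁`. -/
theorem psi_forms_char_two {k : Type*} [Field k] [CharP k 2]
    (u v : k) (X₀ X₁ X₂ X₃ : k)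
    (h1 : X₃ ^ 2 + X₁ * X₃ = (X₀ + u * X₁ - v * X₂) * X₁)
    (h2 : X₁ ^ 2 = X₀ * X₂) :
    (let f₀ := (X₀ - v * X₂) ^ 2
     let f₁ := (X₀ - v * X₂) * X₁
     let f₂ := X₁ ^ 2
     let f₃ := v * X₁ * X₂ + (X₀ + v * X₂) * X₃
     let g₀ := (X₀ + v * X₂) ^ 2
     let g₁ := (X₁ + X₃) * X₃
     let g₂ := X₁ ^ 2
     let g₃ := (X₀ + v * (X₁ + X₃)) * (X₂ + X₃)
     g₀ = f₀ ∧ g₂ = f₂ ∧ g₁ = f₁ + u * f₂ ∧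
       g₃ = v * f₁ + (1 + u * v) * f₂ + f₃) := by
  have h0 : (2:k) = 0 := by exact_mod_cast CharP.cast_eq_zero k 2
  refine ⟨by linear_combination 2*v*X₀*X₂*h0, rfl, by linear_combination h1, by
    linear_combination h2 - v*h1 + (X₀*X₂ + v*X₁*X₃ + v*X₃^2 - v*X₀*X₁ + v^2*X₁*X₂ - X₁^2 - u*v*X₁^2)*h0⟩
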